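/- Let $r \ge 3$, $n \in \mathbb{N}$, and $\delta = 1/(600 r^{3/2})$. Let $G$ be a graph on $n$ vertices with $\delta(G) \ge (1-\delta)n$, and let $X \subseteq V(G)$ with $|X| \le \delta r n$. Then the number of $r$-cliques $K$ of $G$ with $|V(K) \cap X| \ge r^{1/2}$ is at most $k_r / r^2$. -/

import Mathlib

open Finset
open scoped Classical

lemma step_lemma {V : Type*} [Fintype V] (G : SimpleGraph V) (j d : ℕ)
    (hdeg : ∀ v, Fintype.card V ≤ G.degree v + d) :
    (G.cliqueFinset j).card * (Fintype.card V - j*d)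
      ≤ (j+1) * (G.cliqueFinset (j+1)).card := by
  set n := Fintype.card V with hn
  set C : Finset V → Finset V := fun L => univ.filter (fun v => ∀ u ∈ L, G.Adj u v) with hCdef
  have hC : ∀ L ∈ G.cliqueFinset j, n - j*d ≤ (C L).card := by
    intro L hL
    have hLcard : L.card = j := (SimpleGraph.mem_cliqueFinset_iff.1 hL).card_eq
    have hsub : (C L)ᶜ ⊆ L.biUnion (fun u => (G.neighborFinset u)ᶜ) := by
      intro v hv
      simp only [hCdef, mem_compl, mem_filter, mem_univ, true_and, not_forall] at hv
      obtain ⟨u, hu, hadj⟩ := hv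
      simp only [mem_biUnion]
      exact ⟨u, hu, by simp [SimpleGraph.mem_neighborFinset, hadj]⟩
    have hcompl : (C L)ᶜ.card ≤ j * d := by
      calc (C L)ᶜ.card ≤ ∑ u ∈ L, ((G.neighborFinset u)ᶜ).card :=
            le_trans (card_le_card hsub) (card_biUnion_le)
        _ ≤ ∑ u ∈ L, d := by
            refine sum_le_sum fun u _ => ?_
            have := hdeg u
            have hdeg' : (G.neighborFinset u)ᶜ.card = n - G.degree u := by
              rw [card_compl, G.card_neighborFinset_eq_degree]
            omega
        _ = j * d := by rw [sum_const, hLcard, smul_eq_mul]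
    have := card_compl (C L)
    omega
  set s := (G.cliqueFinset j).sigma (fun L => C L) with hs
  have hcard1 : (G.cliqueFinset j).card * (n - j*d) ≤ s.card := by
    rw [hs, card_sigma]
    calc (G.cliqueFinset j).card * (n - j*d)
        = ∑ _L ∈ G.cliqueFinset j, (n - j*d) := by rw [sum_const, smul_eq_mul]
      _ ≤ ∑ L ∈ G.cliqueFinset j, (C L).card := sum_le_sum hC
  have hmaps : ∀ p ∈ s, (insert p.2 p.1 : Finset V) ∈ G.cliqueFinset (j+1) := by
    intro p hp
    rw [hs, mem_sigma] at hp
    obtain ⟨h1, h2⟩ := hp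
    simp only [hCdef, mem_filter, mem_univ, true_and] at h2
    rw [SimpleGraph.mem_cliqueFinset_iff]
    exact (SimpleGraph.mem_cliqueFinset_iff.1 h1).insert (fun b hb => (h2 b hb).symm)
  have hfib : ∀ M ∈ G.cliqueFinset (j+1),
      (s.filter (fun p => (insert p.2 p.1 : Finset V) = M)).card ≤ j+1 := by
    intro M hM
    have hMcard : M.card = j + 1 := (SimpleGraph.mem_cliqueFinset_iff.1 hM).card_eq
    have hnotmem : ∀ p ∈ s, p.2 ∉ p.1 := by
      intro p hp
      rw [hs, mem_sigma] at hp
      obtain ⟨_, h2⟩ := hp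
      simp only [hCdef, mem_filter, mem_univ, true_and] at h2
      intro hmem
      exact G.irrefl (h2 p.2 hmem)
    calc (s.filter (fun p => (insert p.2 p.1 : Finset V) = M)).card
        ≤ M.card := by
          apply card_le_card_of_injOn (fun p => p.2)
          · intro p hp
            rw [mem_coe, mem_filter] at hp
            rw [← hp.2]; exact mem_insert_self _ _
          · intro p hp q hq hpq
            rw [mem_coe, mem_filter] at hp hq
            have hp1 : p.1 = M.erase p.2 := by
              rw [← hp.2, erase_insert (hnotmem p hp.1)]
            have hq1 : q.1 = M.erase q.2 := by
              rw [← hq.2, erase_insert (hnotmem q hq.1)]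
            have hpq2 : p.2 = q.2 := hpq
            have : p.1 = q.1 := by rw [hp1, hq1, hpq2]
            exact Sigma.ext this (heq_of_eq hpq2)
      _ = j + 1 := hMcard
  have hcard2 : s.card ≤ (j+1) * (G.cliqueFinset (j+1)).card :=
    card_le_mul_card_image_of_maps_to hmaps (j+1) hfib
  omega


lemma lower_lemma {V : Type*} [Fintype V] (G : SimpleGraph V) (d : ℕ)
    (hdeg : ∀ v, Fintype.card V ≤ G.degree v + d) :
    ∀ j : ℕ, (∀ i < j, (i*d : ℕ) ≤ Fintype.card V) →
    (∏ i ∈ range j, ((Fintype.card V : ℝ) - i*d))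
      ≤ (j.factorial : ℝ) * (G.cliqueFinset j).card := by
  intro j
  induction j with
  | zero =>
    intro _
    have h0 : G.cliqueFinset 0 = {∅} := by
      ext s
      simp [SimpleGraph.mem_cliqueFinset_iff, SimpleGraph.isNClique_iff,
        Finset.card_eq_zero]
      intro h; subst h; simp [SimpleGraph.IsClique]
    simp [h0]
  | succ j ih =>
    intro hd
    have hjd : (j*d : ℕ) ≤ Fintype.card V := hd j (by omega)
    have hstep := step_lemma G j d hdeg
    have hstepR : ((G.cliqueFinset j).card : ℝ) * ((Fintype.card V : ℝ) - (j:ℝ)*d)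
        ≤ ((j:ℝ)+1) * (G.cliqueFinset (j+1)).card := by
      have := (Nat.cast_le (α := ℝ)).2 hstep
      push_cast [Nat.cast_sub hjd] at this
      convert this using 2 <;> push_cast <;> ring
    have hnn : (0:ℝ) ≤ (Fintype.card V : ℝ) - (j:ℝ)*d := by
      have : ((j*d : ℕ) : ℝ) ≤ (Fintype.card V : ℝ) := Nat.cast_le.2 hjd
      push_cast at this; linarith
    rw [prod_range_succ]
    calc (∏ i ∈ range j, ((Fintype.card V : ℝ) - i*d)) * ((Fintype.card V : ℝ) - (j:ℝ)*d)
        ≤ ((j.factorial : ℝ) * (G.cliqueFinset j).card) * ((Fintype.card V : ℝ) - (j:ℝ)*d) := by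
          apply mul_le_mul_of_nonneg_right (ih (fun i hi => hd i (by omega))) hnn
      _ = (j.factorial : ℝ) * (((G.cliqueFinset j).card : ℝ) * ((Fintype.card V : ℝ) - (j:ℝ)*d)) := by ring
      _ ≤ (j.factorial : ℝ) * (((j:ℝ)+1) * (G.cliqueFinset (j+1)).card) := by
          apply mul_le_mul_of_nonneg_left hstepR (by positivity)
      _ = ((j+1).factorial : ℝ) * (G.cliqueFinset (j+1)).card := by
          rw [Nat.factorial_succ]; push_cast; ring


lemma upper_lemma {V : Type*} [Fintype V] (G : SimpleGraph V) (r t : ℕ) (X : Finset V) :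
    ((G.cliqueFinset r).filter (fun K => t ≤ (K ∩ X).card)).card
      ≤ X.card.choose t * (Fintype.card V).choose (r - t) := by
  have hsub : (G.cliqueFinset r).filter (fun K => t ≤ (K ∩ X).card)
      ⊆ (X.powersetCard t).biUnion
          (fun S => (G.cliqueFinset r).filter (fun K => S ⊆ K)) := by
    intro K hK
    rw [mem_filter] at hK
    obtain ⟨S, hSsub, hScard⟩ := Finset.exists_subset_card_eq hK.2
    rw [mem_biUnion]
    refine ⟨S, ?_, ?_⟩
    · rw [mem_powersetCard]
      exact ⟨hSsub.trans (inter_subset_right), hScard⟩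
    · rw [mem_filter]
      exact ⟨hK.1, hSsub.trans (inter_subset_left)⟩
  have hinner : ∀ S ∈ X.powersetCard t,
      ((G.cliqueFinset r).filter (fun K => S ⊆ K)).card
        ≤ (Fintype.card V).choose (r - t) := by
    intro S hS
    rw [mem_powersetCard] at hS
    calc ((G.cliqueFinset r).filter (fun K => S ⊆ K)).card
        ≤ ((univ : Finset V).powersetCard (r - t)).card := by
          apply card_le_card_of_injOn (fun K => K \ S)
          · intro K hK
            rw [mem_coe, mem_filter] at hK
            rw [mem_coe, mem_powersetCard]
            refine ⟨subset_univ _, ?_⟩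
            rw [card_sdiff_of_subset hK.2, (SimpleGraph.mem_cliqueFinset_iff.1 hK.1).card_eq, hS.2]
          · intro K hK K' hK' h
            rw [mem_coe, mem_filter] at hK hK'
            have h2 : K \ S = K' \ S := h
            have : K \ S ∪ S = K' \ S ∪ S := by rw [h2]
            rwa [sdiff_union_of_subset hK.2, sdiff_union_of_subset hK'.2] at this
      _ = (Fintype.card V).choose (r - t) := by
          rw [card_powersetCard, card_univ]
  calc ((G.cliqueFinset r).filter (fun K => t ≤ (K ∩ X).card)).card
      ≤ ((X.powersetCard t).biUnion
          (fun S => (G.cliqueFinset r).filter (fun K => S ⊆ K))).card := card_le_card hsub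
    _ ≤ ∑ S ∈ X.powersetCard t,
          ((G.cliqueFinset r).filter (fun K => S ⊆ K)).card := card_biUnion_le
    _ ≤ ∑ _S ∈ X.powersetCard t, (Fintype.card V).choose (r - t) := sum_le_sum hinner
    _ = X.card.choose t * (Fintype.card V).choose (r - t) := by
        rw [sum_const, card_powersetCard, smul_eq_mul]


lemma core_lemma (r : ℕ) (hr : 3 ≤ r) :
    (1/(600*Real.sqrt r))^(⌈Real.sqrt r⌉₊) * (r.choose ⌈Real.sqrt r⌉₊) * (r:ℝ)^2
      ≤ (1 - 1/(600*Real.sqrt r))^r := by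
  set s : ℝ := Real.sqrt r with hsdef
  set t : ℕ := ⌈s⌉₊ with htdef
  have hrpos : (0:ℝ) < r := by positivity
  have hs2 : s^2 = r := Real.sq_sqrt (le_of_lt hrpos)
  have hs1 : 1 < s := by
    have h1 : Real.sqrt 1 < Real.sqrt r := by
      apply Real.sqrt_lt_sqrt (by norm_num)
      exact_mod_cast lt_of_lt_of_le (by norm_num : (1:ℕ) < 3) hr
    simpa using h1
  have hspos : (0:ℝ) < s := by linarith
  have hts : s ≤ t := Nat.le_ceil s
  have htposR : (0:ℝ) < t := lt_of_lt_of_le hspos hts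
  have hfacpos : (0:ℝ) < (t.factorial : ℝ) := by positivity
  have hepos : (0:ℝ) < Real.exp 1 := Real.exp_pos 1
  -- choose bound
  have hchoose : ((r.choose t : ℝ)) ≤ (r:ℝ)^t / (t.factorial : ℝ) := by
    rw [le_div_iff₀ hfacpos]
    have h1 : t.factorial * r.choose t ≤ r^t :=
      le_trans (le_of_eq (Nat.descFactorial_eq_factorial_mul_choose r t).symm)
        (Nat.descFactorial_le_pow r t)
    exact_mod_cast Nat.mul_comm t.factorial (r.choose t) ▸ h1
  -- 1/t! ≤ e^t/t^t
  have hfac : (1:ℝ) / (t.factorial : ℝ) ≤ (Real.exp 1)^t / (t:ℝ)^t := by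
    rw [div_le_div_iff₀ hfacpos (by positivity)]
    have h := Real.pow_div_factorial_le_exp (x := (t:ℝ)) (by positivity) t
    rw [div_le_iff₀ hfacpos] at h
    calc (1:ℝ) * (t:ℝ)^t = (t:ℝ)^t := by ring
      _ ≤ Real.exp (t:ℝ) * t.factorial := h
      _ = (Real.exp 1)^t * t.factorial := by rw [← Real.exp_one_pow]
  -- step 1
  have step1 : (1/(600*s))^t * ((r.choose t : ℝ)) ≤ (Real.exp 1/600)^t := by
    calc (1/(600*s))^t * ((r.choose t : ℝ))
        ≤ (1/(600*s))^t * ((r:ℝ)^t / (t.factorial : ℝ)) := by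
          apply mul_le_mul_of_nonneg_left hchoose (by positivity)
      _ = (s/600)^t * (1 / (t.factorial : ℝ)) := by
          have hbase : (1/(600*s)) * (r:ℝ) = s/600 := by
            rw [← hs2]; field_simp
          rw [div_eq_mul_one_div ((r:ℝ)^t) ((t.factorial : ℝ)), ← mul_assoc,
            ← mul_pow, hbase]
      _ ≤ (s/600)^t * ((Real.exp 1)^t / (t:ℝ)^t) := by
          apply mul_le_mul_of_nonneg_left hfac (by positivity)
      _ = (s * Real.exp 1 / (600 * (t:ℝ)))^t := by
          rw [div_pow, div_pow, div_mul_div_comm, ← mul_pow, ← mul_pow]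
      _ ≤ (Real.exp 1/600)^t := by
          apply pow_le_pow_left₀ (by positivity)
          rw [div_le_div_iff₀ (by positivity) (by norm_num)]
          calc s * Real.exp 1 * 600 ≤ (t:ℝ) * Real.exp 1 * 600 := by
                apply mul_le_mul_of_nonneg_right
                  (mul_le_mul_of_nonneg_right hts hepos.le) (by norm_num)
            _ = Real.exp 1 * (600 * (t:ℝ)) := by ring
  -- log 600 ≥ 6
  have hlog600 : (6:ℝ) ≤ Real.log 600 := by
    rw [Real.le_log_iff_exp_le (by norm_num)]
    calc Real.exp 6 = (Real.exp 1)^(6:ℕ) := by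
          rw [Real.exp_one_pow]; norm_num
      _ ≤ (2.7182818286:ℝ)^(6:ℕ) :=
          pow_le_pow_left₀ hepos.le Real.exp_one_lt_d9.le 6
      _ ≤ 600 := by norm_num
  -- step 2 : (e/600)^t * r^2 ≤ exp(-s/300)
  have step2 : (Real.exp 1/600)^t * (r:ℝ)^2 ≤ Real.exp (-(s/300)) := by
    have hb0 : (0:ℝ) < Real.exp 1/600 := by positivity
    have hb1 : Real.exp 1/600 ≤ 1 := by
      rw [div_le_one (by norm_num)]
      calc Real.exp 1 ≤ 2.7182818286 := Real.exp_one_lt_d9.le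
        _ ≤ 600 := by norm_num
    have h1 : ((Real.exp 1/600)^t : ℝ) ≤ (Real.exp 1/600) ^ (s : ℝ) := by
      rw [← Real.rpow_natCast (Real.exp 1/600) t]
      exact Real.rpow_le_rpow_of_exponent_ge hb0 hb1 hts
    have h2 : (Real.exp 1/600) ^ (s:ℝ) = Real.exp ((1 - Real.log 600) * s) := by
      rw [Real.rpow_def_of_pos hb0]
      congr 1
      rw [Real.log_div (by positivity) (by norm_num), Real.log_exp]
    have h3 : (r:ℝ)^2 = Real.exp (4 * Real.log s) := by
      have h4 : Real.exp (4 * Real.log s) = (Real.exp (Real.log s))^(4:ℕ) := by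
        rw [← Real.exp_nat_mul]; norm_num
      rw [h4, Real.exp_log hspos, ← hs2]; ring
    have hlogs : Real.log s ≤ s - 1 := Real.log_le_sub_one_of_pos hspos
    calc (Real.exp 1/600)^t * (r:ℝ)^2
        ≤ (Real.exp 1/600) ^ (s:ℝ) * (r:ℝ)^2 := by
          apply mul_le_mul_of_nonneg_right h1 (by positivity)
      _ = Real.exp ((1 - Real.log 600) * s + 4 * Real.log s) := by
          rw [h2, h3, ← Real.exp_add]
      _ ≤ Real.exp (-(s/300)) := by
          apply Real.exp_le_exp.2
          nlinarith [mul_le_mul_of_nonneg_left hlog600 hspos.le]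
  -- step 3 : exp(-(s/300)) ≤ (1 - 1/(600*s))^r
  have step3 : Real.exp (-(s/300)) ≤ (1 - 1/(600*s))^r := by
    set x : ℝ := 1/(600*s) with hxdef
    have hx0 : 0 < x := by positivity
    have hx1 : x ≤ 1/600 := by
      rw [hxdef]
      rw [div_le_div_iff₀ (by positivity) (by norm_num)]
      nlinarith
    have hkey : Real.exp (-(2*x)) ≤ 1 - x := by
      have h2 : (1:ℝ) ≤ (1-x) * Real.exp (2*x) := by
        calc (1:ℝ) ≤ (1-x) * (1+2*x) := by nlinarith
          _ ≤ (1-x) * Real.exp (2*x) := by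
              apply mul_le_mul_of_nonneg_left _ (by nlinarith)
              have := Real.add_one_le_exp (2*x)
              linarith
      have h4 : Real.exp (-(2*x)) * Real.exp (2*x) = 1 := by
        rw [← Real.exp_add]; simp
      nlinarith [Real.exp_pos (2*x), Real.exp_pos (-(2*x))]
    have hexp_eq : (r:ℝ) * -(2*x) = -(s/300) := by
      rw [hxdef, ← hs2]; field_simp; ring
    calc Real.exp (-(s/300)) = Real.exp (-(2*x))^r := by
          rw [← Real.exp_nat_mul, hexp_eq]
      _ ≤ (1 - x)^r := pow_le_pow_left₀ (Real.exp_pos _).le hkey r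
  calc (1/(600*s))^t * ((r.choose t : ℝ)) * (r:ℝ)^2
      ≤ (Real.exp 1/600)^t * (r:ℝ)^2 := by
        apply mul_le_mul_of_nonneg_right step1 (by positivity)
    _ ≤ Real.exp (-(s/300)) := step2
    _ ≤ (1 - 1/(600*s))^r := step3


set_option maxHeartbeats 1000000 in
/-- Proposition 4.3: few r-cliques have many vertices in a small set X. -/
theorem stmt_6 {V : Type*} [Fintype V] (r : ℕ) (hr : 3 ≤ r)
    (G : SimpleGraph V)
    (hmin : (1 - 1/(600*(r:ℝ)^((3:ℝ)/2))) * (Fintype.card V : ℝ) ≤ (G.minDegree : ℝ))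
    (X : Finset V)
    (hX : (X.card : ℝ) ≤ (1/(600*(r:ℝ)^((3:ℝ)/2))) * (r:ℝ) * (Fintype.card V : ℝ)) :
    ((((G.cliqueFinset r).filter
        (fun K => Real.sqrt r ≤ ((K ∩ X).card : ℝ))).card : ℝ)
      ≤ ((G.cliqueFinset r).card : ℝ) / (r:ℝ)^2) := by
  set n := Fintype.card V with hndef
  -- trivial case : no vertices
  by_cases hn0 : n = 0
  · have hempty : G.cliqueFinset r = ∅ := by
      rw [Finset.eq_empty_iff_forall_notMem]
      intro K hK
      have h1 := (SimpleGraph.mem_cliqueFinset_iff.1 hK).card_eq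
      have h2 : K.card ≤ n := by rw [hndef, ← card_univ]; exact card_le_card (subset_univ K)
      omega
    rw [hempty]
    simp
  have hn : 0 < n := Nat.pos_of_ne_zero hn0
  have hrpos : (0:ℝ) < r := by positivity
  set s : ℝ := Real.sqrt r with hsdef
  set t : ℕ := ⌈s⌉₊ with htdef
  have hs2 : s^2 = r := Real.sq_sqrt (le_of_lt hrpos)
  have hs1 : 1 < s := by
    have h1 : Real.sqrt 1 < Real.sqrt r := by
      apply Real.sqrt_lt_sqrt (by norm_num)
      exact_mod_cast lt_of_lt_of_le (by norm_num : (1:ℕ) < 3) hr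
    simpa [hsdef] using h1
  have hspos : (0:ℝ) < s := by linarith
  -- rewrite the rpow
  have h32 : (r:ℝ)^((3:ℝ)/2) = (r:ℝ) * s := by
    rw [show (3:ℝ)/2 = 1 + 1/2 by norm_num, Real.rpow_add hrpos, Real.rpow_one,
      hsdef, Real.sqrt_eq_rpow]
  set δ : ℝ := 1/(600*(r:ℝ)^((3:ℝ)/2)) with hδdef
  have hδpos : 0 < δ := by rw [hδdef]; positivity
  have hδr : δ * r = 1/(600*s) := by
    rw [hδdef, h32]
    field_simp
  have hδr_le : δ * r ≤ 1/600 := by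
    rw [hδr, div_le_div_iff₀ (by positivity) (by norm_num)]
    nlinarith
  -- degree deficiency
  set d : ℕ := n - G.minDegree with hddef
  have hdeg : ∀ v : V, Fintype.card V ≤ G.degree v + d := by
    intro v
    have h1 := G.minDegree_le_degree v
    rw [← hndef]
    omega
  have hdn : (d:ℝ) ≤ δ * n := by
    by_cases hmd : G.minDegree ≤ n
    · rw [hddef, Nat.cast_sub hmd]
      have : (1 - δ) * (n:ℝ) ≤ (G.minDegree : ℝ) := hmin
      linarith
    · have hd0 : d = 0 := by rw [hddef]; omega
      rw [hd0]
      push_cast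
      positivity
  have hid : ∀ i : ℕ, i ≤ r → (i:ℝ) * d ≤ δ * r * n := by
    intro i hi
    have h1 : (i:ℝ) ≤ r := by exact_mod_cast hi
    have h2 : (0:ℝ) ≤ δ * n := by positivity
    calc (i:ℝ) * d ≤ (i:ℝ) * (δ * n) := by
          apply mul_le_mul_of_nonneg_left hdn (by positivity)
      _ ≤ (r:ℝ) * (δ * n) := by apply mul_le_mul_of_nonneg_right h1 h2
      _ = δ * r * n := by ring
  have hδrn_n : δ * r * n ≤ (1/600) * n := by
    apply mul_le_mul_of_nonneg_right hδr_le (by positivity)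
  have hidn : ∀ i : ℕ, i < r → (i * d : ℕ) ≤ n := by
    intro i hi
    have h1 : ((i*d : ℕ) : ℝ) ≤ (n:ℝ) := by
      push_cast
      calc (i:ℝ) * d ≤ δ * r * n := hid i (le_of_lt hi)
        _ ≤ (1/600) * n := hδrn_n
        _ ≤ (n:ℝ) := by
            have : (0:ℝ) ≤ (n:ℝ) := by positivity
            linarith
    exact_mod_cast h1
  -- lower bound on cliques
  have hlow := lower_lemma G d hdeg r hidn
  have hprodlow : (n:ℝ)^r * (1 - δ*r)^r ≤ ∏ i ∈ range r, ((n:ℝ) - i*d) := by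
    rw [← mul_pow]
    have h1 : ((n:ℝ) * (1 - δ*r))^r = ∏ _i ∈ range r, ((n:ℝ) * (1 - δ*r)) := by
      rw [prod_const, card_range]
    rw [h1]
    apply prod_le_prod
    · intro i _
      have : δ * r ≤ 1 := by linarith
      have hnn : (0:ℝ) ≤ (n:ℝ) := by positivity
      nlinarith
    · intro i hi
      rw [mem_range] at hi
      have h2 : (i:ℝ) * d ≤ δ * r * n := hid i (le_of_lt hi)
      nlinarith
  -- upper bound on bad cliques
  have ht_r : t ≤ r := by
    rw [htdef]
    apply Nat.ceil_le.2
    nlinarith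
  have hbadsub : (G.cliqueFinset r).filter (fun K => Real.sqrt r ≤ ((K ∩ X).card : ℝ))
      ⊆ (G.cliqueFinset r).filter (fun K => t ≤ (K ∩ X).card) := by
    intro K hK
    rw [mem_filter] at hK ⊢
    exact ⟨hK.1, Nat.ceil_le.2 hK.2⟩
  have hupper : ((G.cliqueFinset r).filter
      (fun K => Real.sqrt r ≤ ((K ∩ X).card : ℝ))).card
      ≤ X.card.choose t * n.choose (r - t) :=
    le_trans (card_le_card hbadsub) (upper_lemma G r t X)
  -- numeric facts
  have hfacpos_t : (0:ℝ) < (t.factorial : ℝ) := by positivity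
  have hfacpos_rt : (0:ℝ) < ((r-t).factorial : ℝ) := by positivity
  have hcore : (δ*r)^t * ((r.choose t : ℝ)) * (r:ℝ)^2 ≤ (1 - δ*r)^r := by
    rw [hδr]
    exact core_lemma r hr
  have hcX : ((X.card.choose t : ℝ)) ≤ (δ*r*n)^t / (t.factorial : ℝ) := by
    rw [le_div_iff₀ hfacpos_t]
    have h1 : t.factorial * X.card.choose t ≤ X.card^t :=
      le_trans (le_of_eq (Nat.descFactorial_eq_factorial_mul_choose X.card t).symm)
        (Nat.descFactorial_le_pow X.card t)
    have h2 : ((X.card:ℝ))^t ≤ (δ*r*n)^t :=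
      pow_le_pow_left₀ (by positivity) hX t
    calc ((X.card.choose t : ℝ)) * (t.factorial : ℝ)
        = ((t.factorial * X.card.choose t : ℕ) : ℝ) := by push_cast; ring
      _ ≤ ((X.card^t : ℕ) : ℝ) := by exact_mod_cast h1
      _ = ((X.card:ℝ))^t := by push_cast; ring
      _ ≤ (δ*r*n)^t := h2
  have hcN : ((n.choose (r-t) : ℝ)) ≤ (n:ℝ)^(r-t) / ((r-t).factorial : ℝ) := by
    rw [le_div_iff₀ hfacpos_rt]
    have h1 : (r-t).factorial * n.choose (r-t) ≤ n^(r-t) :=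
      le_trans (le_of_eq (Nat.descFactorial_eq_factorial_mul_choose n (r-t)).symm)
        (Nat.descFactorial_le_pow n (r-t))
    calc ((n.choose (r-t) : ℝ)) * ((r-t).factorial : ℝ)
        = (((r-t).factorial * n.choose (r-t) : ℕ) : ℝ) := by push_cast; ring
      _ ≤ ((n^(r-t) : ℕ) : ℝ) := by exact_mod_cast h1
      _ = (n:ℝ)^(r-t) := by push_cast; ring
  have hfact : (r.factorial : ℝ) = (r.choose t : ℝ) * (t.factorial : ℝ) * ((r-t).factorial : ℝ) := by
    have := Nat.choose_mul_factorial_mul_factorial ht_r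
    exact_mod_cast this.symm
  have hpow : (n:ℝ)^t * (n:ℝ)^(r-t) = (n:ℝ)^r := by
    rw [← pow_add]
    congr 1
    omega
  -- middle inequality
  have hmid : ((X.card.choose t : ℝ)) * ((n.choose (r-t) : ℝ)) * (r:ℝ)^2 * (r.factorial : ℝ)
      ≤ (n:ℝ)^r * (1 - δ*r)^r := by
    calc ((X.card.choose t : ℝ)) * ((n.choose (r-t) : ℝ)) * (r:ℝ)^2 * (r.factorial : ℝ)
        ≤ ((δ*r*n)^t / (t.factorial : ℝ)) * ((n:ℝ)^(r-t) / ((r-t).factorial : ℝ))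
            * (r:ℝ)^2 * (r.factorial : ℝ) := by
          apply mul_le_mul_of_nonneg_right _ (by positivity)
          apply mul_le_mul_of_nonneg_right _ (by positivity)
          exact mul_le_mul hcX hcN (by positivity) (by positivity)
      _ = ((δ*r)^t * ((r.choose t : ℝ)) * (r:ℝ)^2) * ((n:ℝ)^t * (n:ℝ)^(r-t)) := by
          rw [hfact, mul_pow]
          field_simp
      _ = ((δ*r)^t * ((r.choose t : ℝ)) * (r:ℝ)^2) * (n:ℝ)^r := by rw [hpow]
      _ ≤ (1 - δ*r)^r * (n:ℝ)^r := by
          apply mul_le_mul_of_nonneg_right hcore (by positivity)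
      _ = (n:ℝ)^r * (1 - δ*r)^r := by ring
  -- conclude
  have hrfacpos : (0:ℝ) < (r.factorial : ℝ) := by positivity
  have hkey : ((X.card.choose t : ℝ)) * ((n.choose (r-t) : ℝ)) * (r:ℝ)^2
      ≤ ((G.cliqueFinset r).card : ℝ) := by
    have h2 : ((X.card.choose t : ℝ)) * ((n.choose (r-t) : ℝ)) * (r:ℝ)^2 * (r.factorial : ℝ)
        ≤ ((G.cliqueFinset r).card : ℝ) * (r.factorial : ℝ) := by
      calc ((X.card.choose t : ℝ)) * ((n.choose (r-t) : ℝ)) * (r:ℝ)^2 * (r.factorial : ℝ)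
          ≤ (n:ℝ)^r * (1 - δ*r)^r := hmid
        _ ≤ ∏ i ∈ range r, ((n:ℝ) - i*d) := hprodlow
        _ ≤ (r.factorial : ℝ) * ((G.cliqueFinset r).card : ℝ) := hlow
        _ = ((G.cliqueFinset r).card : ℝ) * (r.factorial : ℝ) := mul_comm _ _
    exact le_of_mul_le_mul_right h2 hrfacpos
  rw [le_div_iff₀ (by positivity : (0:ℝ) < (r:ℝ)^2)]
  calc (((G.cliqueFinset r).filter
        (fun K => Real.sqrt r ≤ ((K ∩ X).card : ℝ))).card : ℝ) * (r:ℝ)^2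
      ≤ ((X.card.choose t : ℝ)) * ((n.choose (r-t) : ℝ)) * (r:ℝ)^2 := by
        apply mul_le_mul_of_nonneg_right _ (by positivity)
        push_cast
        exact_mod_cast hupper
    _ ≤ ((G.cliqueFinset r).card : ℝ) := hkey
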